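/- There exist 6×6 integer matrices M₁ and M₂, each of determinant ±1, such that M₁ · B_Q · M₂ is the diagonal matrix diag(1, 1, 2, 2, 4, 4); i.e., the Smith normal form of B_Q is diag(1,1,2,2,4,4). -/

import Mathlib

open Matrix

/-- The Gram matrix `B_Q` of the rank-6 lattice `Q` such that the Néron–Severi lattice of a
triple-double K3 surface with minimal Picard number is isometric to `U ⊕ E₈ ⊕ Q`. -/
def B_Q : Matrix (Fin 6) (Fin 6) ℤ :=
  !![-2,  0,  1,   0,  2,  -1;
      0, -6, -1,  -4,  4,  -5;
      1, -1, -8,   6,  2,   0;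
      0, -4,  6, -16,  4,  -2;
      2,  4,  2,   4, -8,   6;
     -1, -5,  0,  -2,  6, -12]

def M1 : Matrix (Fin 6) (Fin 6) ℤ :=
  !![1, 0, 0, 0, 0, 0;
    -8, 0, -1, 0, 0, 0;
    174, 0, 31, 7, 16, 1;
    709, 1, 126, 28, 66, 4;
    27668, 36, 4919, 1095, 2575, 157;
    880, 2, 153, 32, 77, 3]

def M2 : Matrix (Fin 6) (Fin 6) ℤ :=
  !![0, 0, 1, 0, -2, 62;
     0, 1, -119, -400, 22, 0;
     1, 0, 20, 67, -5, 41;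
     0, 0, 0, 2, -1, 28;
     0, 0, 20, 62, -5, 49;
     0, 0, 58, 191, -11, 15]

def N1 : Matrix (Fin 6) (Fin 6) ℤ :=
  !![1, 0, 0, 0, 0, 0;
     -1, -6, 242, 809, -22, -8;
     -8, -1, 0, 0, 0, 0;
     6, -4, 280, 918, -25, -9;
     2, 4, -123, -404, 11, 4;
     0, -5, 9, 38, -1, -1]

def N2 : Matrix (Fin 6) (Fin 6) ℤ :=
  !![-2, 0, 1, 0, 2, -1;
     15, 1, 0, -6, -18, 8;
     -143, 0, 0, 68, 158, -52;
     -582, 0, 0, 280, 641, -211;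
     -11356, 0, 0, 5459, 12510, -4118;
     -364, 0, 0, 175, 401, -132]

lemma unit_of_inv {M N : Matrix (Fin 6) (Fin 6) ℤ} (h : M * N = 1) :
    M.det = 1 ∨ M.det = -1 := by
  have h2 : M.det * N.det = 1 := by rw [← Matrix.det_mul, h, Matrix.det_one]
  exact Int.isUnit_iff.mp (IsUnit.of_mul_eq_one _ h2)

set_option maxRecDepth 100000 in
lemma hM1 : M1 * N1 = 1 := by decide

set_option maxRecDepth 100000 in
lemma hM2 : M2 * N2 = 1 := by decide

set_option maxRecDepth 100000 in
lemma hprod : M1 * B_Q * M2 = Matrix.diagonal ![1, 1, 2, 2, 4, 4] := by decide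

/-- The Smith normal form of `B_Q` is `diag(1,1,2,2,4,4)`: there are integer matrices `M₁`
and `M₂` of determinant `±1` with `M₁ · B_Q · M₂ = diag(1,1,2,2,4,4)`. -/
theorem stmt_16 :
    ∃ M₁ M₂ : Matrix (Fin 6) (Fin 6) ℤ,
      (M₁.det = 1 ∨ M₁.det = -1) ∧ (M₂.det = 1 ∨ M₂.det = -1) ∧
      M₁ * B_Q * M₂ = Matrix.diagonal ![1, 1, 2, 2, 4, 4] := by
  exact ⟨M1, M2, unit_of_inv hM1, unit_of_inv hM2, hprod⟩
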